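/- Let f(φ) = Σ_{s∈S} f_s e^{i s·φ} with S ⊂ ℤ^n finite and |s|₁ ≤ m for all s ∈ S, and suppose the set {s ∈ ℤ^n : |s|₁ ≤ m, s·W ≠ 0} is nonempty; let κ(W,m) = min{|s·W| : s ∈ ℤ^n, |s|₁ ≤ m, s·W ≠ 0} > 0. Then for every T > 0 and every φ ∈ ℝ^n, |(1/T) ∫₀^T f(φ + tW) dt − ⟨f⟩_W(φ)| ≤ (2/(T κ(W,m))) Σ_{s∈S} |f_s|. -/

import Mathlib

open scoped BigOperators
open MeasureTheory

lemma angle_int (a : ℝ) (z : ℤ) (hz : a = z) :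
    ∫ θ in Set.Icc (0:ℝ) (2*Real.pi), Complex.exp (Complex.I * a * θ) =
      if a = 0 then ((2*Real.pi : ℝ) : ℂ) else 0 := by
  rw [MeasureTheory.integral_Icc_eq_integral_Ioc,
    ← intervalIntegral.integral_of_le (by positivity : (0:ℝ) ≤ 2*Real.pi)]
  by_cases h : a = 0
  · simp [h, Complex.ofReal_mul]
  · have hc : (Complex.I * a) ≠ 0 := by
      simp [Complex.ext_iff, h]
    rw [if_neg h]
    have := integral_exp_mul_complex (a := 0) (b := 2*Real.pi) hc
    simp only [mul_assoc] at this ⊢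
    rw [this]
    have h1 : Complex.exp (Complex.I * (a * (2*Real.pi))) = 1 := by
      have : (Complex.I * (a * (2*Real.pi)) : ℂ) = (z : ℂ) * (2 * Real.pi * Complex.I) := by
        rw [hz]; push_cast; ring
      rw [this, Complex.exp_int_mul_two_pi_mul_I]
    simp [h1]

lemma time_int (w T : ℝ) (hw : w ≠ 0) :
    ∫ t in (0:ℝ)..T, Complex.exp (Complex.I * w * t) =
      (Complex.exp (Complex.I * w * T) - 1) / (Complex.I * w) := by
  have hc : (Complex.I * w) ≠ 0 := by simp [Complex.ext_iff, hw]
  have := integral_exp_mul_complex (a := 0) (b := T) hc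
  simp only [mul_assoc] at this ⊢
  rw [this]; simp

lemma time_bound (w T κ : ℝ) (hT : 0 < T) (hκ : 0 < κ) (hκw : w ≠ 0 → κ ≤ |w|) :
    ‖(1/T : ℂ) * (∫ t in (0:ℝ)..T, Complex.exp (Complex.I * w * t)) -
      (if w = 0 then 1 else 0)‖ ≤ 2/(T*κ) := by
  by_cases h : w = 0
  · simp [h, hT.ne']
    positivity
  · rw [if_neg h, time_int w T h, sub_zero]
    have h2 : ‖(1/T : ℂ) * ((Complex.exp (Complex.I * w * T) - 1) / (Complex.I * w))‖
        = ‖Complex.exp (Complex.I * w * T) - 1‖ / (T * |w|) := by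
      simp only [norm_mul, norm_div, Complex.norm_real, Real.norm_eq_abs, Complex.norm_I, norm_one, one_mul]
      rw [abs_of_pos hT]
      field_simp
    rw [h2]
    have hb : ‖Complex.exp (Complex.I * w * T) - 1‖ ≤ 2 := by
      have := norm_add_le (Complex.exp (Complex.I * w * T)) (-1)
      have h3 : Complex.I * w * T = ((w*T : ℝ) : ℂ) * Complex.I := by push_cast; ring
      rw [h3] at this ⊢
      simp only [Complex.norm_exp_ofReal_mul_I, norm_neg, norm_one] at this
      calc ‖Complex.exp ((w*T : ℝ) * Complex.I) - 1‖
          ≤ 1 + 1 := by simpa [sub_eq_add_neg, Complex.norm_exp_ofReal_mul_I] using this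
        _ = 2 := by norm_num
    have hκw' := hκw h
    have hwpos : 0 < |w| := abs_pos.mpr h
    calc ‖Complex.exp (Complex.I * w * T) - 1‖ / (T * |w|)
        ≤ 2 / (T * |w|) := by gcongr
      _ ≤ 2 / (T * κ) := by
          gcongr

lemma box_integral {ι : Type*} [Fintype ι] (g : ι → ℝ → ℂ) :
    ∫ θ : ι → ℝ in Set.univ.pi (fun _ => Set.Icc (0:ℝ) (2*Real.pi)), ∏ j, g j (θ j)
      = ∏ j, ∫ θ in Set.Icc (0:ℝ) (2*Real.pi), g j θ := by
  classical
  rw [← MeasureTheory.integral_indicator (MeasurableSet.univ_pi fun _ => measurableSet_Icc)]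
  have key : (Set.univ.pi (fun _ : ι => Set.Icc (0:ℝ) (2*Real.pi))).indicator
      (fun θ => ∏ j, g j (θ j)) =
      fun θ => ∏ j, (Set.Icc (0:ℝ) (2*Real.pi)).indicator (g j) (θ j) := by
    funext θ
    by_cases h : θ ∈ Set.univ.pi (fun _ : ι => Set.Icc (0:ℝ) (2*Real.pi))
    · rw [Set.indicator_of_mem h]
      refine Finset.prod_congr rfl fun j _ => ?_
      rw [Set.indicator_of_mem (h j (Set.mem_univ j))]
    · rw [Set.indicator_of_notMem h]
      simp only [Set.mem_pi, Set.mem_univ, forall_true_left] at h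
      push_neg at h
      obtain ⟨j, hj⟩ := h
      exact (Finset.prod_eq_zero (Finset.mem_univ j)
        (by rw [Set.indicator_of_notMem hj])).symm
  rw [key, MeasureTheory.integral_fintype_prod_volume_eq_prod
    (f := fun j θ => (Set.Icc (0:ℝ) (2*Real.pi)).indicator (g j) θ)]
  exact Finset.prod_congr rfl fun j _ =>
    MeasureTheory.integral_indicator measurableSet_Icc

lemma span_dot_zero {n : ℕ} (u : Fin n → ℝ) (s0 : Set (Fin n → ℝ))
    (h0 : ∀ x ∈ s0, ∑ k, x k * u k = 0) :
    ∀ x ∈ Submodule.span ℝ s0, ∑ k, x k * u k = 0 := by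
  let L : (Fin n → ℝ) →ₗ[ℝ] ℝ :=
    { toFun := fun x => ∑ k, x k * u k
      map_add' := by intro x y; simp [add_mul, Finset.sum_add_distrib]
      map_smul' := by intro a x; simp [Finset.mul_sum, mul_assoc] }
  intro x hx
  have : Submodule.span ℝ s0 ≤ LinearMap.ker L := by
    rw [Submodule.span_le]
    intro y hy
    exact LinearMap.mem_ker.mpr (h0 y hy)
  exact this hx

/-- Let `f(φ) = Σ_{s∈S} f_s e^{i s·φ}` with `|s|₁ ≤ m` for all `s ∈ S`, and
suppose `{s ∈ ℤⁿ : |s|₁ ≤ m, s·W ≠ 0}` is nonempty; let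
`κ(W,m) = min{|s·W| : |s|₁ ≤ m, s·W ≠ 0} > 0`.  Then for every `T > 0` and every `φ`,
`|(1/T)∫₀^T f(φ + tW) dt − ⟨f⟩_W(φ)| ≤ (2/(T κ(W,m))) Σ_{s∈S} |f_s|`. -/
theorem statement10 (n m : ℕ) (W : Fin n → ℝ)
    (A : Set (Fin n → ℤ))
    (hA : A = {s : Fin n → ℤ | (∑ k, |s k|) ≤ (m : ℤ) ∧ (∑ k, (s k : ℝ) * W k) = 0})
    (AR : Submodule ℝ (Fin n → ℝ))
    (hAR : AR = Submodule.span ℝ ((fun (s : Fin n → ℤ) (k : Fin n) => (s k : ℝ)) '' A))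
    (r : ℕ) (hr : r = Module.finrank ℝ AR)
    (ζ : Fin n → Fin n → ℤ)
    (hspan : Submodule.span ℝ
        ((fun (j : Fin n) (k : Fin n) => (ζ j k : ℝ)) '' {j : Fin n | (j : ℕ) < r}) = AR)
    (hdet : (Matrix.of fun i j : Fin n => ζ j i).det = 1 ∨
        (Matrix.of fun i j : Fin n => ζ j i).det = -1)
    (Rmat : Matrix (Fin n) (Fin n) ℝ)
    (hRmat : Rmat = Matrix.of fun i j : Fin n => (ζ j i : ℝ))
    (η : Fin n → Fin n → ℝ)
    (hη : ∀ j : Fin n, η j = Rmat.transpose⁻¹.mulVec (Pi.single j 1))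
    (S : Finset (Fin n → ℤ)) (c : (Fin n → ℤ) → ℂ)
    (hdeg : ∀ s ∈ S, (∑ k, |s k|) ≤ (m : ℤ))
    (f : (Fin n → ℝ) → ℂ)
    (hf : ∀ φ, f φ = ∑ s ∈ S,
        c s * Complex.exp (Complex.I * Complex.ofReal (∑ k, (s k : ℝ) * φ k)))
    (favg : (Fin n → ℝ) → ℂ)
    (hfavg : ∀ φ, favg φ =
        (((2 * Real.pi) ^ (Fintype.card {j : Fin n // r ≤ (j : ℕ)}))⁻¹ : ℝ) •
          ∫ θ : {j : Fin n // r ≤ (j : ℕ)} → ℝ in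
              Set.univ.pi (fun _ => Set.Icc (0:ℝ) (2 * Real.pi)),
            f (fun k => φ k + ∑ j : {j : Fin n // r ≤ (j : ℕ)}, θ j * η (j : Fin n) k))
    (hne : {x : ℝ | ∃ s : Fin n → ℤ, (∑ k, |s k|) ≤ (m : ℤ) ∧
        (∑ k, (s k : ℝ) * W k) ≠ 0 ∧ x = |∑ k, (s k : ℝ) * W k|}.Nonempty)
    (κ : ℝ)
    (hκ : κ = sInf {x : ℝ | ∃ s : Fin n → ℤ, (∑ k, |s k|) ≤ (m : ℤ) ∧
        (∑ k, (s k : ℝ) * W k) ≠ 0 ∧ x = |∑ k, (s k : ℝ) * W k|}) :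
    0 < κ ∧
    ∀ T : ℝ, 0 < T → ∀ φ : Fin n → ℝ,
      ‖(1 / T : ℂ) * (∫ t in (0:ℝ)..T, f (fun k => φ k + t * W k)) - favg φ‖ ≤
        (2 / (T * κ)) * ∑ s ∈ S, ‖c s‖ := by
  classical
  -- notation
  set w : (Fin n → ℤ) → ℝ := fun s => ∑ k, (s k : ℝ) * W k with hw
  set v : (Fin n → ℤ) → Fin n → ℝ := fun s j => ∑ k, (s k : ℝ) * η j k with hv
  ------------------------------------------------------------------
  -- Part 1 : κ is positive and bounds |s·W| from below
  ------------------------------------------------------------------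
  set K := {x : ℝ | ∃ s : Fin n → ℤ, (∑ k, |s k|) ≤ (m : ℤ) ∧
        (∑ k, (s k : ℝ) * W k) ≠ 0 ∧ x = |∑ k, (s k : ℝ) * W k|} with hK
  have hfin : K.Finite := by
    have hB : {s : Fin n → ℤ | ∀ k, s k ∈ Set.Icc (-(m:ℤ)) m}.Finite := by
      have := Set.Finite.pi (fun i : Fin n => Set.finite_Icc (-(m:ℤ)) m)
      refine this.subset ?_
      intro s hs
      exact fun k _ => hs k
    refine ((hB.image (fun s => |∑ k, (s k : ℝ) * W k|)).subset ?_)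
    rintro x ⟨s, hm, hwn, rfl⟩
    refine ⟨s, fun k => ?_, rfl⟩
    have h1 : |s k| ≤ ∑ k, |s k| :=
      Finset.single_le_sum (fun i _ => abs_nonneg (s i)) (Finset.mem_univ k)
    constructor
    · linarith [neg_abs_le (s k)]
    · linarith [le_abs_self (s k)]
  have hκpos : 0 < κ := by
    have hmem : κ ∈ K := hκ ▸ hne.csInf_mem hfin
    obtain ⟨s, -, hwn, h⟩ := hmem
    rw [h]
    exact abs_pos.mpr hwn
  have hκle : ∀ s : Fin n → ℤ, (∑ k, |s k|) ≤ (m:ℤ) → w s ≠ 0 → κ ≤ |w s| := by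
    intro s hm hwn
    rw [hκ]
    exact csInf_le hfin.bddBelow ⟨s, hm, hwn, rfl⟩
  ------------------------------------------------------------------
  -- Part 2 : matrix and span facts
  ------------------------------------------------------------------
  set Z : Matrix (Fin n) (Fin n) ℤ := Matrix.of fun i j : Fin n => ζ j i with hZ
  have hcast : Rmat = (Int.castRingHom ℝ).mapMatrix Z := by
    rw [hRmat]; ext i j; simp [hZ]
  have hdetcast : Rmat.det = ((Z.det : ℤ) : ℝ) := by
    rw [hcast, ← RingHom.map_det]; rfl
  have hunit : IsUnit Rmat.det := by
    rcases hdet with h | h <;> rw [hdetcast, h] <;> norm_num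
  have horth : ∀ i j : Fin n, (∑ k, (ζ i k : ℝ) * η j k) = if i = j then 1 else 0 := by
    intro i j
    have h1 : Rmat.transpose.mulVec (η j) = Pi.single j 1 := by
      rw [hη, Matrix.mulVec_mulVec, Matrix.mul_nonsing_inv _ (by rwa [Matrix.det_transpose]),
        Matrix.one_mulVec]
    have h2 := congrFun h1 i
    simp only [Matrix.mulVec, dotProduct, Matrix.transpose_apply, hRmat,
      Matrix.of_apply, Pi.single_apply] at h2
    rw [← h2]
  have hηval : ∀ j k, η j k = Rmat⁻¹ j k := by
    intro j k
    rw [hη, ← Matrix.transpose_nonsing_inv]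
    simp [Matrix.mulVec, dotProduct, Matrix.transpose_apply, Pi.single_apply]
  have hinvZ : ∀ j k, Rmat⁻¹ j k = ((Z.det * Z.adjugate j k : ℤ) : ℝ) := by
    intro j k
    rw [Matrix.inv_def]
    have hadj : Rmat.adjugate = (Int.castRingHom ℝ).mapMatrix Z.adjugate := by
      rw [hcast, RingHom.map_adjugate]
    have hdinv : Rmat.det⁻¹ = ((Z.det : ℤ) : ℝ) := by
      rcases hdet with h | h <;> rw [hdetcast, h] <;> norm_num
    rw [hadj]
    simp only [Matrix.smul_apply, hdinv, RingHom.mapMatrix_apply, Matrix.map_apply,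
      smul_eq_mul, Ring.inverse_eq_inv']
    push_cast [Int.coe_castRingHom]
    ring
  -- resonance characterization
  have hres : ∀ s : Fin n → ℤ, (∑ k, |s k|) ≤ (m:ℤ) →
      (w s = 0 ↔ ∀ j : Fin n, r ≤ (j:ℕ) → v s j = 0) := by
    intro s hm
    constructor
    · intro hws j hj
      have hsA : (fun k => (s k : ℝ)) ∈ AR := by
        rw [hAR]
        exact Submodule.subset_span ⟨s, by rw [hA]; exact ⟨hm, hws⟩, rfl⟩
      rw [← hspan] at hsA
      refine span_dot_zero (η j) _ ?_ _ hsA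
      rintro x ⟨i, hi, rfl⟩
      rw [horth i j, if_neg]
      intro hij
      rw [hij] at hi
      exact absurd hi (by simpa using hj)
    · intro hvz
      set sR : Fin n → ℝ := fun k => (s k : ℝ) with hsR
      set u : Fin n → ℝ := Rmat⁻¹.mulVec sR with hu
      have hrecon : sR = ∑ j : Fin n, u j • (fun k => (ζ j k : ℝ)) := by
        have h1 : Rmat.mulVec u = sR := by
          rw [hu, Matrix.mulVec_mulVec, Matrix.mul_nonsing_inv _ hunit, Matrix.one_mulVec]
        funext k
        rw [← h1]
        simp only [Matrix.mulVec, dotProduct, hRmat, Matrix.of_apply,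
          Finset.sum_apply, Pi.smul_apply, smul_eq_mul]
        exact Finset.sum_congr rfl fun x _ => mul_comm _ _
      have hudot : ∀ j, u j = ∑ k, (s k : ℝ) * η j k := by
        intro j
        simp only [hu, Matrix.mulVec, dotProduct, hsR]
        exact Finset.sum_congr rfl fun k _ => by rw [hηval j k]; ring
      have hmem : sR ∈ AR := by
        rw [← hspan, hrecon]
        refine Submodule.sum_mem _ fun j _ => ?_
        by_cases hj : r ≤ (j : ℕ)
        · have : u j = 0 := by rw [hudot j]; exact hvz j hj
          rw [this, zero_smul]
          exact Submodule.zero_mem _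
        · exact Submodule.smul_mem _ _ (Submodule.subset_span
            ⟨j, show (j:ℕ) < r from Nat.lt_of_not_le hj, rfl⟩)
      rw [hAR] at hmem
      refine span_dot_zero W _ ?_ _ hmem
      rintro x ⟨t, ht, rfl⟩
      rw [hA] at ht
      exact ht.2
  -- integrality of v
  have hvint : ∀ s : (Fin n → ℤ), ∀ j : Fin n, ∃ z : ℤ, v s j = z := by
    intro s j
    refine ⟨Z.det * (∑ k, Z.adjugate j k * s k), ?_⟩
    have h4 : ∀ k, (s k : ℝ) * η j k = ((Z.det * Z.adjugate j k * s k : ℤ) : ℝ) := by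
      intro k
      rw [hηval j k, hinvZ j k]
      push_cast
      ring
    simp only [hv]
    rw [Finset.sum_congr rfl fun k _ => h4 k]
    push_cast
    rw [Finset.mul_sum]
    exact Finset.sum_congr rfl fun x _ => by ring
  ------------------------------------------------------------------
  -- Part 3 : the estimate
  ------------------------------------------------------------------
  refine ⟨hκpos, fun T hT φ => ?_⟩
  set d : (Fin n → ℤ) → ℝ := fun s => ∑ k, (s k : ℝ) * φ k with hd
  -- time integral
  have htime : (∫ t in (0:ℝ)..T, f (fun k => φ k + t * W k)) =
      ∑ s ∈ S, c s * Complex.exp (Complex.I * (d s)) *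
        ∫ t in (0:ℝ)..T, Complex.exp (Complex.I * (w s) * t) := by
    have hintg : ∀ t : ℝ, f (fun k => φ k + t * W k) =
        ∑ s ∈ S, c s * Complex.exp (Complex.I * (d s)) *
          Complex.exp (Complex.I * (w s) * t) := by
      intro t
      rw [hf]
      refine Finset.sum_congr rfl fun s _ => ?_
      have h1 : (∑ k, (s k : ℝ) * (φ k + t * W k)) = d s + w s * t := by
        simp only [hd, hw, mul_add, Finset.sum_add_distrib, Finset.sum_mul]
        congr 1
        exact Finset.sum_congr rfl fun k _ => by ring
      rw [h1]
      push_cast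
      rw [mul_add, Complex.exp_add]
      ring
    simp only [hintg]
    rw [intervalIntegral.integral_finset_sum]
    · exact Finset.sum_congr rfl fun s _ => intervalIntegral.integral_const_mul _ _
    · intro s _
      apply Continuous.intervalIntegrable
      fun_prop
  -- the average
  have hfavg2 : favg φ = ∑ s ∈ S, c s * Complex.exp (Complex.I * (d s)) *
      (if w s = 0 then 1 else 0) := by
    rw [hfavg]
    have hintg : ∀ θ : {j : Fin n // r ≤ (j : ℕ)} → ℝ,
        f (fun k => φ k + ∑ j : {j : Fin n // r ≤ (j : ℕ)}, θ j * η (j : Fin n) k) =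
        ∑ s ∈ S, c s * Complex.exp (Complex.I * (d s)) *
          ∏ j : {j : Fin n // r ≤ (j : ℕ)},
            Complex.exp (Complex.I * (v s (j : Fin n)) * (θ j)) := by
      intro θ
      rw [hf]
      refine Finset.sum_congr rfl fun s _ => ?_
      have h1 : (∑ k, (s k : ℝ) * (φ k + ∑ j : {j : Fin n // r ≤ (j : ℕ)}, θ j * η (j:Fin n) k))
          = d s + ∑ j : {j : Fin n // r ≤ (j : ℕ)}, v s (j : Fin n) * θ j := by
        simp only [hd, hv, mul_add, Finset.sum_add_distrib, Finset.mul_sum]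
        congr 1
        rw [Finset.sum_comm]
        refine Finset.sum_congr rfl fun j _ => ?_
        rw [Finset.sum_mul]
        exact Finset.sum_congr rfl fun k _ => by ring
      rw [h1]
      push_cast
      rw [mul_add, Complex.exp_add, Finset.mul_sum, Complex.exp_sum]
      simp only [mul_assoc]
    simp only [hintg]
    rw [MeasureTheory.integral_finset_sum]
    · rw [Finset.smul_sum]
      refine Finset.sum_congr rfl fun s hs => ?_
      rw [MeasureTheory.integral_const_mul,
        box_integral (fun (j : {j : Fin n // r ≤ (j : ℕ)}) (t : ℝ) =>
          Complex.exp (Complex.I * (v s (j : Fin n)) * t))]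
      have hang : ∀ j : {j : Fin n // r ≤ (j : ℕ)},
          (∫ θ in Set.Icc (0:ℝ) (2*Real.pi),
            Complex.exp (Complex.I * (v s (j : Fin n)) * θ)) =
          if v s (j : Fin n) = 0 then ((2*Real.pi : ℝ) : ℂ) else 0 := by
        intro j
        obtain ⟨z, hz⟩ := hvint s (j : Fin n)
        exact angle_int _ z hz
      rw [Finset.prod_congr rfl fun j _ => hang j]
      by_cases hws : w s = 0
      · have hall : ∀ j : {j : Fin n // r ≤ (j : ℕ)}, v s (j : Fin n) = 0 :=
          fun j => (hres s (hdeg s hs)).mp hws j j.2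
        rw [Finset.prod_congr rfl fun j _ => by rw [if_pos (hall j)]]
        rw [Finset.prod_const, if_pos hws, Finset.card_univ]
        have hcards : ((2*Real.pi : ℝ) : ℂ) ^ (Fintype.card {j : Fin n // r ≤ (j : ℕ)})
            = (((2*Real.pi) ^ (Fintype.card {j : Fin n // r ≤ (j : ℕ)}) : ℝ) : ℂ) := by
          push_cast
          rfl
        rw [hcards, Complex.real_smul]
        push_cast
        have hppos : (0:ℝ) < (2*Real.pi) ^ (Fintype.card {j : Fin n // r ≤ (j : ℕ)}) := by
          positivity
        have hne2 : ((2 : ℂ) * Real.pi) ^ Fintype.card {j : Fin n // r ≤ (j : ℕ)} ≠ 0 := by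
          apply pow_ne_zero
          simp [Real.pi_ne_zero]
        field_simp
      · obtain ⟨j0, hj0r, hj0⟩ : ∃ j : Fin n, r ≤ (j:ℕ) ∧ v s j ≠ 0 := by
          by_contra hcon
          push_neg at hcon
          exact hws ((hres s (hdeg s hs)).mpr hcon)
        rw [Finset.prod_eq_zero (Finset.mem_univ (⟨j0, hj0r⟩ : {j : Fin n // r ≤ (j : ℕ)}))
          (by rw [if_neg hj0])]
        rw [if_neg hws]
        simp
    · intro s _
      refine ContinuousOn.integrableOn_compact (isCompact_univ_pi fun _ => isCompact_Icc) ?_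
      exact Continuous.continuousOn (by fun_prop)
  -- assemble
  rw [htime, hfavg2, Finset.mul_sum, ← Finset.sum_sub_distrib]
  have hterm : ∀ s ∈ S,
      ‖(1/T : ℂ) * (c s * Complex.exp (Complex.I * (d s)) *
          ∫ t in (0:ℝ)..T, Complex.exp (Complex.I * (w s) * t)) -
        c s * Complex.exp (Complex.I * (d s)) * (if w s = 0 then 1 else 0)‖ ≤
      ‖c s‖ * (2/(T*κ)) := by
    intro s hs
    have hfactor : (1/T : ℂ) * (c s * Complex.exp (Complex.I * (d s)) *
          ∫ t in (0:ℝ)..T, Complex.exp (Complex.I * (w s) * t)) -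
        c s * Complex.exp (Complex.I * (d s)) * (if w s = 0 then 1 else 0) =
        (c s * Complex.exp (Complex.I * (d s))) *
          ((1/T : ℂ) * (∫ t in (0:ℝ)..T, Complex.exp (Complex.I * (w s) * t)) -
            (if w s = 0 then 1 else 0)) := by
      ring
    rw [hfactor, norm_mul, norm_mul]
    have habs1 : ‖Complex.exp (Complex.I * (d s))‖ = 1 := by
      rw [show (Complex.I * (d s) : ℂ) = ((d s : ℝ) : ℂ) * Complex.I from mul_comm _ _,
        Complex.norm_exp_ofReal_mul_I]
    rw [habs1, mul_one]
    exact mul_le_mul_of_nonneg_left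
      (time_bound (w s) T κ hT hκpos (hκle s (hdeg s hs))) (norm_nonneg _)
  calc ‖∑ s ∈ S, ((1/T : ℂ) * (c s * Complex.exp (Complex.I * (d s)) *
          ∫ t in (0:ℝ)..T, Complex.exp (Complex.I * (w s) * t)) -
        c s * Complex.exp (Complex.I * (d s)) * (if w s = 0 then 1 else 0))‖
      ≤ ∑ s ∈ S, ‖(1/T : ℂ) * (c s * Complex.exp (Complex.I * (d s)) *
          ∫ t in (0:ℝ)..T, Complex.exp (Complex.I * (w s) * t)) -
        c s * Complex.exp (Complex.I * (d s)) * (if w s = 0 then 1 else 0)‖ :=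
        norm_sum_le _ _
    _ ≤ ∑ s ∈ S, ‖c s‖ * (2/(T*κ)) := Finset.sum_le_sum hterm
    _ = (2/(T*κ)) * ∑ s ∈ S, ‖c s‖ := by
        rw [Finset.mul_sum]
        exact Finset.sum_congr rfl fun s _ => mul_comm _ _
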